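/- Let D be a multiplicative Hom-Lie algebra structure on a Lie algebra g with D^m = D for some integer m ≥ 2. Then Der_k(g) = Der_s(g) whenever k, s > 0 and k ≡ s mod (m-1); consequently the Hilbert series Σ_{k≥0} dim Der_k(g)·t^k equals (ℓ_0(1-t^{m-1}) + Σ_{k=1}^{m-1} ℓ_k t^k)/(1-t^{m-1}) where ℓ_k = dim Der_k(g), assuming g is finite-dimensional over ℂ. -/

import Mathlib

/-- The space `Der_k(g)` of `D^k`-derivations, as a submodule of `End(g)`. -/
def DerK {g : Type*} [LieRing g] [LieAlgebra ℂ g] (D : g →ₗ[ℂ] g) (k : ℕ) :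
    Submodule ℂ (g →ₗ[ℂ] g) where
  carrier := {δ | D ∘ₗ δ = δ ∘ₗ D ∧
    ∀ x y : g, δ ⁅x, y⁆ = ⁅δ x, (D ^ k) y⁆ + ⁅(D ^ k) x, δ y⁆}
  add_mem' := by
    rintro δ τ ⟨h1, h2⟩ ⟨h3, h4⟩
    refine ⟨?_, fun x y => ?_⟩
    · ext v
      simp only [LinearMap.comp_apply, LinearMap.add_apply, map_add]
      rw [← LinearMap.comp_apply D δ, h1, ← LinearMap.comp_apply D τ, h3]; rfl
    · simp [LinearMap.add_apply, h2, h4, lie_add, add_lie]; abel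
  zero_mem' := by exact ⟨by ext v; simp, fun x y => by simp⟩
  smul_mem' := by
    rintro c δ ⟨h1, h2⟩
    refine ⟨?_, fun x y => ?_⟩
    · ext v; simpa using congrArg (c • ·) (LinearMap.congr_fun h1 v)
    · simp [LinearMap.smul_apply, h2, lie_smul, smul_lie, smul_add]

open PowerSeries in
/-- if `D` is a multiplicative Hom-Lie structure on a
finite-dimensional complex Lie algebra `g` with `D^m = D` (`m ≥ 2`), then
`Der_k(g) = Der_s(g)` whenever `k, s > 0` and `k ≡ s mod (m-1)`, and the
Hilbert series `Σ dim Der_k(g) tᵏ` equals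
`(ℓ₀(1-t^{m-1}) + Σ_{k=1}^{m-1} ℓ_k tᵏ)/(1-t^{m-1})` where
`ℓ_k = dim Der_k(g)`. -/
theorem stmt19 {g : Type*} [LieRing g] [LieAlgebra ℂ g] [FiniteDimensional ℂ g]
    (D : g →ₗ[ℂ] g) (m : ℕ) (hm : 2 ≤ m)
    (hmul : ∀ x y, D ⁅x, y⁆ = ⁅D x, D y⁆)
    (hhj : ∀ x y z : g, ⁅D x, ⁅y, z⁆⁆ + ⁅D y, ⁅z, x⁆⁆ + ⁅D z, ⁅x, y⁆⁆ = 0)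
    (hDm : D ^ m = D) :
    (∀ k s : ℕ, 0 < k → 0 < s → k % (m - 1) = s % (m - 1) →
      DerK D k = DerK D s) ∧
    (PowerSeries.mk fun k => (Module.finrank ℂ (DerK D k) : ℚ)) *
        (1 - PowerSeries.X ^ (m - 1)) =
      PowerSeries.C (Module.finrank ℂ (DerK D 0) : ℚ) *
          (1 - PowerSeries.X ^ (m - 1)) +
        ∑ k ∈ Finset.Icc 1 (m - 1),
          PowerSeries.C (Module.finrank ℂ (DerK D k) : ℚ) *
            PowerSeries.X ^ k := by
  -- abbreviations
  have hd1 : 1 ≤ m - 1 := by omega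
  -- one-step periodicity of powers of `D`
  have hstep : ∀ a : ℕ, 0 < a → D ^ (a + (m - 1)) = D ^ a := by
    intro a ha
    obtain ⟨b, rfl⟩ : ∃ b, a = b + 1 := ⟨a - 1, by omega⟩
    have h : b + 1 + (m - 1) = b + m := by omega
    rw [h, pow_add, hDm, ← pow_succ]
  have hiter : ∀ j a : ℕ, 0 < a → D ^ (a + j * (m - 1)) = D ^ a := by
    intro j
    induction j with
    | zero => simp
    | succ j ih =>
      intro a ha
      have h : a + (j + 1) * (m - 1) = (a + j * (m - 1)) + (m - 1) := by ring
      rw [h, hstep _ (by omega), ih a ha]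
  have hnorm : ∀ t : ℕ, 0 < t → D ^ t = D ^ (t % (m - 1) + (m - 1)) := by
    intro t ht
    obtain ⟨r, hr⟩ : ∃ r, r = t % (m - 1) := ⟨_, rfl⟩
    rw [← hr]
    rcases Nat.lt_or_ge t (m - 1) with hlt | hge
    · rw [hr, Nat.mod_eq_of_lt hlt]; exact (hstep t ht).symm
    · have hq : 1 ≤ t / (m - 1) := (Nat.one_le_div_iff (by omega)).mpr hge
      obtain ⟨q', hq'⟩ : ∃ q', t / (m - 1) = q' + 1 := ⟨t / (m - 1) - 1, by omega⟩
      have h2 : (m - 1) * (q' + 1) + r = t := by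
        rw [hr, ← hq']; exact Nat.div_add_mod t (m - 1)
      have ht' : t = (r + (m - 1)) + q' * (m - 1) := by rw [← h2]; ring
      have e1 : D ^ t = D ^ ((r + (m - 1)) + q' * (m - 1)) := by rw [← ht']
      exact e1.trans (hiter q' _ (by omega))
  have hpow : ∀ k s : ℕ, 0 < k → 0 < s → k % (m - 1) = s % (m - 1) → D ^ k = D ^ s := by
    intro k s hk hs h
    rw [hnorm k hk, hnorm s hs, h]
  have hDer : ∀ k s : ℕ, D ^ k = D ^ s → DerK D k = DerK D s := by
    intro k s h
    apply SetLike.ext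
    intro δ
    constructor
    · rintro ⟨h1, h2⟩
      exact ⟨h1, fun x y => by rw [h2 x y, h]⟩
    · rintro ⟨h1, h2⟩
      exact ⟨h1, fun x y => by rw [h2 x y, h]⟩
  have hKS : ∀ k s : ℕ, 0 < k → 0 < s → k % (m - 1) = s % (m - 1) → DerK D k = DerK D s :=
    fun k s hk hs h => hDer k s (hpow k s hk hs h)
  refine ⟨hKS, ?_⟩
  -- periodicity of the dimensions
  set ℓ : ℕ → ℚ := fun k => (Module.finrank ℂ (DerK D k) : ℚ) with hℓ
  have hper : ∀ n : ℕ, m - 1 < n → ℓ n = ℓ (n - (m - 1)) := by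
    intro n hn
    have h1 : 0 < n - (m - 1) := by omega
    have h2 : n % (m - 1) = (n - (m - 1)) % (m - 1) := by
      conv_lhs => rw [show n = (n - (m - 1)) + (m - 1) by omega]
      rw [Nat.add_mod_right]
    simp only [hℓ]
    rw [hKS n (n - (m - 1)) (by omega) h1 h2]
  ext n
  rw [mul_sub, mul_one, mul_sub, mul_one]
  simp only [map_sub, map_add, map_sum, PowerSeries.coeff_mk,
    PowerSeries.coeff_mul_X_pow', PowerSeries.coeff_C_mul, PowerSeries.coeff_X_pow,
    PowerSeries.coeff_one, PowerSeries.coeff_C, mul_ite, mul_one, mul_zero]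
  have hsum : (∑ x ∈ Finset.Icc 1 (m - 1),
      if x ≤ n then if n - x = 0 then (Module.finrank ℂ (DerK D x) : ℚ) else 0 else 0) =
      if 1 ≤ n ∧ n ≤ m - 1 then ℓ n else 0 := by
    rcases Classical.em (1 ≤ n ∧ n ≤ m - 1) with h | h
    · rw [if_pos h, Finset.sum_eq_single_of_mem n (Finset.mem_Icc.mpr h)]
      · rw [if_pos le_rfl, if_pos (Nat.sub_self n)]
      · intro b hb hbn
        by_cases hb1 : b ≤ n
        · rw [if_pos hb1, if_neg (by omega)]
        · rw [if_neg hb1]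
    · rw [if_neg h, Finset.sum_eq_zero]
      intro b hb
      rw [Finset.mem_Icc] at hb
      by_cases hb1 : b ≤ n
      · rw [if_pos hb1, if_neg (by omega)]
      · rw [if_neg hb1]
  rw [hsum]
  have hl0 : (Module.finrank ℂ (DerK D 0) : ℚ) = ℓ 0 := rfl
  rw [hl0]
  split_ifs
  any_goals (exfalso; omega)
  any_goals ring
  · rw [show n - (m - 1) = 0 from by omega]
  · rw [hper n (by omega)]; ring
  · rw [show n = 0 from by omega]
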